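/- Let H₀ be a complex Hilbert space and A a unital subalgebra of B(H₀). On the product Hilbert space H := H₀ × H₀, for a₁, a₂ ∈ A let diag(a₁, a₂) denote the bounded operator (x, y) ↦ (a₁ x, a₂ y). Suppose K is a unitary operator on H such that K ∘ diag(a₁, a₂) ∘ K* = diag(a₂, a₁) for all a₁, a₂ ∈ A. Then there exist unitary operators K₂ and K₃ on H₀, each commuting with every element of A, such that K(x, y) = (K₂ y, K₃ x) for all (x, y) ∈ H. -/

import Mathlib

open ContinuousLinearMap

/-- The diagonal operator `diag(a₁, a₂) : (x, y) ↦ (a₁ x, a₂ y)` on the Hilbert-space product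
`H₀ ×₂ H₀`. -/
noncomputable def diagOp {H₀ : Type*} [NormedAddCommGroup H₀] [InnerProductSpace ℂ H₀]
    (a₁ a₂ : H₀ →L[ℂ] H₀) : WithLp 2 (H₀ × H₀) →L[ℂ] WithLp 2 (H₀ × H₀) :=
  ((WithLp.prodContinuousLinearEquiv 2 ℂ H₀ H₀).symm :
      H₀ × H₀ →L[ℂ] WithLp 2 (H₀ × H₀)) ∘L
    (a₁.prodMap a₂) ∘L
    ((WithLp.prodContinuousLinearEquiv 2 ℂ H₀ H₀) :
      WithLp 2 (H₀ × H₀) →L[ℂ] H₀ × H₀)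

/-- If a unitary `K` on `H = H₀ × H₀` implements the twist by grading,
`K ∘ diag(a₁, a₂) ∘ K* = diag(a₂, a₁)` for all `a₁, a₂` in a unital subalgebra `A` of `B(H₀)`,
then `K` is antidiagonal: `K (x, y) = (K₂ y, K₃ x)` for unitaries `K₂, K₃` commuting with `A`. -/
theorem twist_by_grading_antidiagonal
    {H₀ : Type*} [NormedAddCommGroup H₀] [InnerProductSpace ℂ H₀] [CompleteSpace H₀]
    (A : Subalgebra ℂ (H₀ →L[ℂ] H₀))
    (K : WithLp 2 (H₀ × H₀) →L[ℂ] WithLp 2 (H₀ × H₀))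
    (hK1 : K ∘L adjoint K = 1) (hK2 : adjoint K ∘L K = 1)
    (htw : ∀ a₁ ∈ A, ∀ a₂ ∈ A, K ∘L diagOp a₁ a₂ ∘L adjoint K = diagOp a₂ a₁) :
    ∃ K₂ K₃ : H₀ →L[ℂ] H₀,
      (K₂ ∘L adjoint K₂ = 1 ∧ adjoint K₂ ∘L K₂ = 1) ∧
      (K₃ ∘L adjoint K₃ = 1 ∧ adjoint K₃ ∘L K₃ = 1) ∧
      (∀ a ∈ A, K₂ ∘L a = a ∘L K₂) ∧
      (∀ a ∈ A, K₃ ∘L a = a ∘L K₃) ∧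
      ∀ x y : H₀,
        (WithLp.prodContinuousLinearEquiv 2 ℂ H₀ H₀)
            (K ((WithLp.prodContinuousLinearEquiv 2 ℂ H₀ H₀).symm (x, y))) = (K₂ y, K₃ x) := by
  set e := WithLp.prodContinuousLinearEquiv 2 ℂ H₀ H₀ with he
  have hKK : ∀ v, adjoint K (K v) = v := by
    intro v
    have := DFunLike.congr_fun hK2 v
    simpa using this
  have hKK' : ∀ v, K (adjoint K v) = v := by
    intro v
    have := DFunLike.congr_fun hK1 v
    simpa using this
  have hdiag : ∀ (a b : H₀ →L[ℂ] H₀) (w : WithLp 2 (H₀ × H₀)),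
      diagOp a b w = e.symm (a (e w).1, b (e w).2) := by
    intro a b w
    simp [diagOp, he, Prod.map]
  have hint : ∀ a₁ ∈ A, ∀ a₂ ∈ A, ∀ v,
      K (diagOp a₁ a₂ v) = diagOp a₂ a₁ (K v) := by
    intro a₁ h₁ a₂ h₂ v
    have h := DFunLike.congr_fun (htw a₁ h₁ a₂ h₂) (K v)
    simpa [hKK] using h
  have hint' : ∀ a₁ ∈ A, ∀ a₂ ∈ A, ∀ v,
      adjoint K (diagOp a₂ a₁ v) = diagOp a₁ a₂ (adjoint K v) := by
    intro a₁ h₁ a₂ h₂ v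
    have h := DFunLike.congr_fun (htw a₁ h₁ a₂ h₂) v
    simp only [comp_apply] at h
    rw [← h, hKK]
  -- vanishing components for K
  have h1 : ∀ x : H₀, (e (K (e.symm (x, 0)))).1 = 0 := by
    intro x
    have h := hint 1 A.one_mem 0 A.zero_mem (e.symm (x, 0))
    rw [hdiag, hdiag] at h
    have := congrArg (fun w => (e w).1) h
    simpa using this
  have h2 : ∀ y : H₀, (e (K (e.symm (0, y)))).2 = 0 := by
    intro y
    have h := hint 0 A.zero_mem 1 A.one_mem (e.symm (0, y))
    rw [hdiag, hdiag] at h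
    have := congrArg (fun w => (e w).2) h
    simpa using this
  -- vanishing components for adjoint K
  have h1' : ∀ x : H₀, (e (adjoint K (e.symm (x, 0)))).1 = 0 := by
    intro x
    have h := hint' 0 A.zero_mem 1 A.one_mem (e.symm (x, 0))
    rw [hdiag, hdiag] at h
    have := congrArg (fun w => (e w).1) h
    simpa using this
  have h2' : ∀ y : H₀, (e (adjoint K (e.symm (0, y)))).2 = 0 := by
    intro y
    have h := hint' 1 A.one_mem 0 A.zero_mem (e.symm (0, y))
    rw [hdiag, hdiag] at h
    have := congrArg (fun w => (e w).2) h
    simpa using this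
  -- the corner operators
  set K₂ : H₀ →L[ℂ] H₀ :=
    (ContinuousLinearMap.fst ℂ H₀ H₀) ∘L (e : WithLp 2 (H₀ × H₀) →L[ℂ] H₀ × H₀) ∘L K ∘L
      (e.symm : H₀ × H₀ →L[ℂ] WithLp 2 (H₀ × H₀)) ∘L (ContinuousLinearMap.inr ℂ H₀ H₀)
    with hK₂def
  set K₃ : H₀ →L[ℂ] H₀ :=
    (ContinuousLinearMap.snd ℂ H₀ H₀) ∘L (e : WithLp 2 (H₀ × H₀) →L[ℂ] H₀ × H₀) ∘L K ∘L
      (e.symm : H₀ × H₀ →L[ℂ] WithLp 2 (H₀ × H₀)) ∘L (ContinuousLinearMap.inl ℂ H₀ H₀)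
    with hK₃def
  have hK₂app : ∀ y, K₂ y = (e (K (e.symm (0, y)))).1 := fun y => rfl
  have hK₃app : ∀ x, K₃ x = (e (K (e.symm (x, 0)))).2 := fun x => rfl
  set l2 : H₀ → H₀ := fun y => (e (adjoint K (e.symm (0, y)))).1 with hl2def
  set l3 : H₀ → H₀ := fun x => (e (adjoint K (e.symm (x, 0)))).2 with hl3def
  have hsplit : ∀ x y : H₀,
      ((e.symm (x, y)) : WithLp 2 (H₀ × H₀)) = e.symm (x, 0) + e.symm (0, y) := by
    intro x y; rw [← map_add]; norm_num
  have hmain : ∀ x y : H₀, e (K (e.symm (x, y))) = (K₂ y, K₃ x) := by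
    intro x y
    rw [hsplit, map_add, map_add]
    ext
    · show (e (K (e.symm (x, 0)))).1 + (e (K (e.symm (0, y)))).1 = K₂ y
      rw [h1 x, zero_add]; exact (hK₂app y).symm
    · show (e (K (e.symm (x, 0)))).2 + (e (K (e.symm (0, y)))).2 = K₃ x
      rw [h2 y, add_zero]; exact (hK₃app x).symm
  have hmain' : ∀ x y : H₀, e (adjoint K (e.symm (x, y))) = (l2 y, l3 x) := by
    intro x y
    rw [hsplit, map_add, map_add]
    ext
    · show (e (adjoint K (e.symm (x, 0)))).1 + (e (adjoint K (e.symm (0, y)))).1 = l2 y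
      rw [h1' x, zero_add]
    · show (e (adjoint K (e.symm (x, 0)))).2 + (e (adjoint K (e.symm (0, y)))).2 = l3 x
      rw [h2' y, add_zero]
  have hKapp : ∀ x y : H₀, K (e.symm (x, y)) = e.symm (K₂ y, K₃ x) := by
    intro x y
    rw [← hmain x y]; simp
  have hKapp' : ∀ x y : H₀, adjoint K (e.symm (x, y)) = e.symm (l2 y, l3 x) := by
    intro x y
    rw [← hmain' x y]; simp
  have hl2zero : l2 0 = 0 := by show (e (adjoint K (e.symm 0))).1 = 0; simp
  have hl3zero : l3 0 = 0 := by show (e (adjoint K (e.symm 0))).2 = 0; simp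
  -- inverse relations
  have hK₂l3 : ∀ x, K₂ (l3 x) = x := by
    intro x
    have h := hKK' (e.symm (x, 0))
    rw [hKapp', hl2zero, hKapp] at h
    have := congrArg (fun w => (e w).1) h
    simpa using this
  have hl3K₂ : ∀ y, l3 (K₂ y) = y := by
    intro y
    have h := hKK (e.symm (0, y))
    rw [hKapp, hKapp'] at h
    have h3 : K₃ 0 = 0 := by simp
    rw [h3] at h
    have := congrArg (fun w => (e w).2) h
    simpa using this
  have hK₃l2 : ∀ y, K₃ (l2 y) = y := by
    intro y
    have h := hKK' (e.symm (0, y))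
    rw [hKapp', hl3zero, hKapp] at h
    have := congrArg (fun w => (e w).2) h
    simpa using this
  have hl2K₃ : ∀ x, l2 (K₃ x) = x := by
    intro x
    have h := hKK (e.symm (x, 0))
    rw [hKapp, hKapp'] at h
    have h3 : K₂ 0 = 0 := by simp
    rw [h3] at h
    have := congrArg (fun w => (e w).1) h
    simpa using this
  -- K preserves inner products
  have hiso : ∀ a b : WithLp 2 (H₀ × H₀), inner ℂ (K a) (K b) = inner ℂ a b := by
    intro a b
    rw [← ContinuousLinearMap.adjoint_inner_left, hKK]
  have hiso2 : ∀ u v : H₀, inner ℂ (K₂ u) (K₂ v) = inner ℂ u v := by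
    intro u v
    have h := hiso (e.symm (0, u)) (e.symm (0, v))
    rw [hKapp, hKapp] at h
    have h3 : K₃ 0 = 0 := by simp
    rw [h3] at h
    simpa [he, WithLp.prod_inner_apply] using h
  have hiso3 : ∀ u v : H₀, inner ℂ (K₃ u) (K₃ v) = inner ℂ u v := by
    intro u v
    have h := hiso (e.symm (u, 0)) (e.symm (v, 0))
    rw [hKapp, hKapp] at h
    have h3 : K₂ 0 = 0 := by simp
    rw [h3] at h
    simpa [he, WithLp.prod_inner_apply] using h
  have hadj2 : adjoint K₂ ∘L K₂ = 1 := by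
    ext u
    apply ext_inner_right ℂ
    intro v
    rw [comp_apply, ContinuousLinearMap.adjoint_inner_left, hiso2]
    simp
  have hadj3 : adjoint K₃ ∘L K₃ = 1 := by
    ext u
    apply ext_inner_right ℂ
    intro v
    rw [comp_apply, ContinuousLinearMap.adjoint_inner_left, hiso3]
    simp
  have hadj2' : K₂ ∘L adjoint K₂ = 1 := by
    ext z
    have h := DFunLike.congr_fun hadj2 (l3 z)
    simp only [comp_apply, one_apply_eq_self] at h ⊢
    conv_lhs => rw [← hK₂l3 z, h, hK₂l3 z]
  have hadj3' : K₃ ∘L adjoint K₃ = 1 := by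
    ext z
    have h := DFunLike.congr_fun hadj3 (l2 z)
    simp only [comp_apply, one_apply_eq_self] at h ⊢
    conv_lhs => rw [← hK₃l2 z, h, hK₃l2 z]
  refine ⟨K₂, K₃, ⟨hadj2', hadj2⟩, ⟨hadj3', hadj3⟩, ?_, ?_, fun x y => hmain x y⟩
  · intro a ha
    ext y
    have h := hint 0 A.zero_mem a ha (e.symm (0, y))
    rw [hdiag, hdiag] at h
    simp only [ContinuousLinearEquiv.apply_symm_apply, zero_apply] at h
    rw [hKapp, hKapp] at h
    have h3 : K₃ 0 = 0 := by simp
    rw [h3] at h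
    simp only [ContinuousLinearEquiv.apply_symm_apply, map_zero] at h
    have := congrArg (fun w => (e w).1) h
    simpa using this
  · intro a ha
    ext x
    have h := hint a ha 0 A.zero_mem (e.symm (x, 0))
    rw [hdiag, hdiag] at h
    simp only [ContinuousLinearEquiv.apply_symm_apply, zero_apply] at h
    rw [hKapp, hKapp] at h
    have h3 : K₂ 0 = 0 := by simp
    rw [h3] at h
    simp only [ContinuousLinearEquiv.apply_symm_apply, map_zero] at h
    have := congrArg (fun w => (e w).2) h
    simpa using this
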